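/- arXiv:1210.0405 — 6 statements merged into one kernel-verified Lean document; each statement's English description precedes it below -/
import Mathlib

section
/- If a partition n = (2^{i₁}−1) + (2^{i₂}−1) + ⋯ + (2^{i_k}−1) with i₁ > i₂ > ⋯ > i_k ≥ 1 has all exponents distinct (the gap-1 condition), then it is a minimum almost binary partition of n, i.e., τ_P(n) = k. -/
def nu (d : ℕ) : ℕ := 2 ^ d - 1

def IsABP (n : ℕ) (P : Multiset ℕ) : Prop :=
  (∀ i ∈ P, 1 ≤ i) ∧ (P.map nu).sum = n

noncomputable def tauP (n : ℕ) : ℕ :=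
  sInf {k | ∃ P : Multiset ℕ, IsABP n P ∧ P.card = k}

def IsSABP (n : ℕ) (P N : Multiset ℕ) : Prop :=
  (∀ i ∈ P, 1 ≤ i) ∧ (∀ j ∈ N, 1 ≤ j) ∧
    (n : ℤ) = ((P.map nu).sum : ℤ) - ((N.map nu).sum : ℤ)

noncomputable def tau (n : ℕ) : ℕ :=
  sInf {k | ∃ P N : Multiset ℕ, IsSABP n P N ∧ P.card + N.card = k}

noncomputable def tauC (n : ℕ) : ℕ :=
  sInf {k | ∃ (r : ℕ) (N : Multiset ℕ), IsSABP n {r} N ∧ 1 + N.card = k}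

def greedy : ℕ → Multiset ℕ
  | 0 => 0
  | (n+1) => Nat.log 2 (n+2) ::ₘ greedy (n + 1 - nu (Nat.log 2 (n+2)))
  decreasing_by
    have h1 : 0 < Nat.log 2 (n+2) := Nat.log_pos one_lt_two (by omega)
    have h2 : 2 ^ 1 ≤ 2 ^ Nat.log 2 (n+2) := Nat.pow_le_pow_right (by norm_num) h1
    simp only [nu] at *
    omega

open Classical in
noncomputable def dualf (n : ℕ) : ℕ :=
  if ∃ k : ℕ, 1 ≤ k ∧ n = 2 ^ k - 1 then n else 3 * 2 ^ Nat.log 2 n - n - 2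

def parentT (v : ℕ × ℕ) : ℕ × ℕ := (v.1 + 1, v.2 / 2)

def levelT (v : ℕ × ℕ) : ℕ := v.1 + 1

def treeGraph : SimpleGraph (ℕ × ℕ) where
  Adj u v := parentT u = v ∨ parentT v = u
  symm := ⟨by intro u v h; tauto⟩
  loopless := ⟨by intro v h; simp [parentT, Prod.ext_iff] at h⟩

noncomputable def cutCard (S : Finset (ℕ × ℕ)) : ℕ :=
  Set.ncard {v : ℕ × ℕ | ¬ ((v ∈ S) ↔ (parentT v ∈ S))}

def leafCount (S : Finset (ℕ × ℕ)) : ℕ := (S.filter (fun v => v.1 = 0)).card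

def completeSubtree (v : ℕ × ℕ) : Finset (ℕ × ℕ) :=
  (Finset.range (v.1 + 1)).biUnion (fun a =>
    (Finset.Ico (v.2 * 2 ^ (v.1 - a)) ((v.2 + 1) * 2 ^ (v.1 - a))).image (fun i => (a, i)))

def Bd (d : ℕ) : Finset (ℕ × ℕ) := completeSubtree (d - 1, 0)

def cutBd (d : ℕ) (X : Finset (ℕ × ℕ)) : ℕ :=
  ((Bd d).filter (fun v => v.1 + 1 < d ∧ ¬((v ∈ X) ↔ parentT v ∈ X))).card

noncomputable def deltaB (d i : ℕ) : ℕ :=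
  sInf {c | ∃ X ⊆ Bd d, X.card = i ∧ cutBd d X = c}

noncomputable def tauC0 (n : ℕ) : ℕ := if n = 0 then 0 else tauC n

def fS (S : Finset (ℕ × ℕ)) (v : ℕ × ℕ) : ℤ :=
  if v ∈ S ∧ parentT v ∉ S then 2 ^ levelT v - 1
  else if v ∉ S ∧ parentT v ∈ S then -(2 ^ levelT v - 1)
  else 0

def pc : ℕ → ℕ
  | 0 => 0
  | (n+1) => pc ((n+1)/2) + (n+1) % 2
  decreasing_by exact Nat.div_lt_self (Nat.succ_pos n) one_lt_two

lemma pc_two_mul_add (a r : ℕ) (hr : r < 2) : pc (2 * a + r) = pc a + r := by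
  rcases Nat.eq_zero_or_pos (2 * a + r) with h | h
  · have : a = 0 ∧ r = 0 := by omega
    simp [this.1, this.2, pc]
  · obtain ⟨t, ht⟩ : ∃ t, 2 * a + r = t + 1 := ⟨2 * a + r - 1, by omega⟩
    rw [ht, pc]
    have h1 : (t + 1) / 2 = a := by omega
    have h2 : (t + 1) % 2 = r := by omega
    rw [h1, h2]

lemma pc_subadd : ∀ n a b : ℕ, a + b ≤ n → pc (a + b) ≤ pc a + pc b := by
  intro n
  induction n using Nat.strong_induction_on with
  | _ n ih =>
    intro a b hab
    rcases Nat.eq_zero_or_pos (a + b) with h | h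
    · have : a = 0 ∧ b = 0 := by omega
      simp [this.1, this.2]
    obtain ⟨a', ra, hra, ha⟩ : ∃ a' r, r < 2 ∧ a = 2 * a' + r := ⟨a / 2, a % 2, by omega, by omega⟩
    obtain ⟨b', rb, hrb, hb⟩ : ∃ b' r, r < 2 ∧ b = 2 * b' + r := ⟨b / 2, b % 2, by omega, by omega⟩
    subst ha hb
    rcases Nat.lt_or_ge (ra + rb) 2 with hr | hr
    · have : 2 * a' + ra + (2 * b' + rb) = 2 * (a' + b') + (ra + rb) := by ring
      rw [this, pc_two_mul_add _ _ hr, pc_two_mul_add _ _ hra, pc_two_mul_add _ _ hrb]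
      have h1 : pc (a' + b') ≤ pc a' + pc b' := by
        refine ih (a' + b') (by omega) _ _ le_rfl
      omega
    · have hra1 : ra = 1 := by omega
      have hrb1 : rb = 1 := by omega
      subst hra1 hrb1
      have heq : 2 * a' + 1 + (2 * b' + 1) = 2 * (a' + b' + 1) + 0 := by ring
      rw [heq, pc_two_mul_add _ _ (by omega), pc_two_mul_add _ _ hra, pc_two_mul_add _ _ hrb]
      have h1 : pc (a' + b' + 1) ≤ pc (a' + b') + pc 1 := by
        refine ih (a' + b' + 1) (by omega) _ _ le_rfl
      have h2 : pc (a' + b') ≤ pc a' + pc b' := by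
        refine ih (a' + b') (by omega) _ _ le_rfl
      have h3 : pc 1 = 1 := by
        have := pc_two_mul_add 0 1 (by omega); simpa [pc] using this
      omega

lemma pc_pow_add : ∀ (i s : ℕ), s < 2 ^ i → pc (2 ^ i + s) = pc s + 1 := by
  intro i
  induction i with
  | zero =>
    intro s hs
    interval_cases s
    have h0 : pc 0 = 0 := by simp [pc]
    have h1 := pc_two_mul_add 0 1 one_lt_two
    rw [h0] at h1
    norm_num at h1
    rw [h0]
    norm_num
    exact h1
  | succ i ih =>
    intro s hs
    obtain ⟨s', r, hr, hss⟩ : ∃ s' r, r < 2 ∧ s = 2 * s' + r := ⟨s / 2, s % 2, by omega, by omega⟩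
    subst hss
    have heq : 2 ^ (i + 1) + (2 * s' + r) = 2 * (2 ^ i + s') + r := by ring
    rw [heq, pc_two_mul_add _ _ hr, pc_two_mul_add _ _ hr]
    have hlt : s' < 2 ^ i := by
      have := pow_succ 2 i; omega
    rw [ih s' hlt]
    omega

lemma pc_pow (i : ℕ) : pc (2 ^ i) = 1 := by
  have := pc_pow_add i 0 (pow_pos (by norm_num) i)
  simpa [pc] using this

lemma pc_even_lt (x : ℕ) (hx : 0 < x) (he : Even x) : pc x < x := by
  obtain ⟨a, ha⟩ := he
  have hax : x = 2 * a + 0 := by omega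
  rw [hax, pc_two_mul_add _ _ (by omega)]
  have : ∀ a : ℕ, pc a ≤ a := by
    intro a
    induction a using Nat.strong_induction_on with
    | _ a ih =>
      rcases Nat.eq_zero_or_pos a with h | h
      · simp [h, pc]
      obtain ⟨a', r, hr, haa⟩ : ∃ a' r, r < 2 ∧ a = 2 * a' + r := ⟨a / 2, a % 2, by omega, by omega⟩
      subst haa
      rw [pc_two_mul_add _ _ hr]
      have := ih a' (by omega)
      omega
  have := this a
  omega

lemma pc_sum_distinct : ∀ (l : List ℕ), l.Pairwise (· > ·) →
    (∀ i, (∀ j ∈ l, j < i) → (l.map (2 ^ ·)).sum < 2 ^ i) ∧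
    pc (l.map (2 ^ ·)).sum = l.length := by
  intro l
  induction l with
  | nil => intro _; refine ⟨fun i _ => pow_pos (by norm_num) i, by simp [pc]⟩
  | cons a l ih =>
    intro hs
    have hs' : l.Pairwise (· > ·) := hs.of_cons
    have hlt : ∀ j ∈ l, j < a := fun j hj => (List.pairwise_cons.mp hs).1 j hj
    obtain ⟨hbound, hpc⟩ := ih hs'
    have hsa : (l.map (2 ^ ·)).sum < 2 ^ a := hbound a hlt
    constructor
    · intro i hi
      have hai : a < i := hi a (by simp)
      have : 2 ^ a + (l.map (2 ^ ·)).sum < 2 ^ (a + 1) := by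
        have := pow_succ 2 a; omega
      have h2 : 2 ^ (a + 1) ≤ 2 ^ i := Nat.pow_le_pow_right (by norm_num) (by omega)
      simpa using lt_of_lt_of_le this h2
    · simp only [List.map_cons, List.sum_cons, List.length_cons]
      rw [pc_pow_add a _ hsa, hpc]

lemma pc_sum_le_card (s : Multiset ℕ) : pc ((s.map (2 ^ ·)).sum) ≤ Multiset.card s := by
  induction s using Multiset.induction with
  | empty => simp [pc]
  | cons a s ih =>
    simp only [Multiset.map_cons, Multiset.sum_cons, Multiset.card_cons]
    calc pc (2 ^ a + (s.map (2 ^ ·)).sum) ≤ pc (2 ^ a) + pc (s.map (2 ^ ·)).sum :=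
          pc_subadd _ _ _ le_rfl
      _ ≤ 1 + Multiset.card s := by rw [pc_pow]; omega
      _ = Multiset.card s + 1 := by omega

lemma sum_pow_even (s : Multiset ℕ) (h : ∀ d ∈ s, 1 ≤ d) : Even ((s.map (2 ^ ·)).sum) := by
  induction s using Multiset.induction with
  | empty => simp
  | cons a s ih =>
    simp only [Multiset.map_cons, Multiset.sum_cons]
    refine Even.add ?_ (ih fun d hd => h d (Multiset.mem_cons_of_mem hd))
    have ha : 1 ≤ a := h a (Multiset.mem_cons_self a s)
    obtain ⟨b, hb⟩ : ∃ b, a = b + 1 := ⟨a - 1, by omega⟩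
    exact ⟨2 ^ b, by rw [hb, pow_succ]; ring⟩

lemma sum_pow_eq_sum_nu (s : Multiset ℕ) :
    (s.map (2 ^ ·)).sum = (s.map nu).sum + Multiset.card s := by
  induction s using Multiset.induction with
  | empty => simp
  | cons a s ih =>
    simp only [Multiset.map_cons, Multiset.sum_cons, Multiset.card_cons]
    have : 2 ^ a = nu a + 1 := by
      have : 1 ≤ 2 ^ a := Nat.one_le_two_pow
      simp only [nu]; omega
    omega

theorem stmt5 (n : ℕ) (l : List ℕ) (hsort : l.Pairwise (· > ·))
    (hpos : ∀ d ∈ l, 1 ≤ d) (hsum : (l.map nu).sum = n) :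
    tauP n = l.length := by
  set S : Set ℕ := {k | ∃ P : Multiset ℕ, IsABP n P ∧ P.card = k} with hS
  have hmem : l.length ∈ S := by
    refine ⟨(l : Multiset ℕ), ⟨fun i hi => hpos i (by simpa using hi), ?_⟩, by simp⟩
    simpa using hsum
  have hle : tauP n ≤ l.length := Nat.sInf_le hmem
  -- facts about l
  have hksum : ((l : Multiset ℕ).map (2 ^ ·)).sum = n + l.length := by
    rw [sum_pow_eq_sum_nu]
    simp [hsum]
  have hkeven : Even (n + l.length) := by
    rw [← hksum]
    exact sum_pow_even _ (fun d hd => hpos d (by simpa using hd))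
  have hkpc : pc (n + l.length) = l.length := by
    rw [← hksum]
    have := (pc_sum_distinct l hsort).2
    simpa using this
  -- sInf is attained
  obtain ⟨P, ⟨hP1, hP2⟩, hPcard⟩ := Nat.sInf_mem (⟨l.length, hmem⟩ : S.Nonempty)
  rw [show sInf S = tauP n from rfl] at hPcard
  have hge : l.length ≤ tauP n := by
    set m := tauP n with hm
    have hmsum : (P.map (2 ^ ·)).sum = n + m := by
      rw [sum_pow_eq_sum_nu, hP2, hPcard]
    have hmeven : Even (n + m) := by
      rw [← hmsum]; exact sum_pow_even _ hP1
    have hmpc : pc (n + m) ≤ m := by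
      rw [← hmsum]
      calc pc ((P.map (2 ^ ·)).sum) ≤ Multiset.card P := pc_sum_le_card P
        _ = m := hPcard
    by_contra hcon
    push_neg at hcon
    have hdpos : 0 < l.length - m := by omega
    have hdeven : Even (l.length - m) := by
      obtain ⟨a, ha⟩ := hkeven
      obtain ⟨b, hb⟩ := hmeven
      exact ⟨a - b, by omega⟩
    have hsplit : n + l.length = (n + m) + (l.length - m) := by omega
    have h1 : pc (n + l.length) ≤ pc (n + m) + pc (l.length - m) := by
      rw [hsplit]; exact pc_subadd _ _ _ le_rfl
    have h2 : pc (l.length - m) < l.length - m := pc_even_lt _ hdpos hdeven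
    omega
  omega
end

section
/- Define τ(n) to be the minimum of |P| + |N| over all pairs of finite multisets (P, N) of positive integers with n = Σ_{i∈P}(2^i − 1) − Σ_{j∈N}(2^j − 1). Then τ(n) = τ(f(n)), where f(n) = n if n = 2^k − 1 for some k, and f(n) = 3·2^⌊log₂ n⌋ − n − 2 otherwise. -/
lemma nu_pow (a : ℕ) : nu a + 1 = 2^a := by
  have := Nat.one_le_two_pow (n := a); unfold nu; omega

lemma nu_succ (a : ℕ) : nu (a+1) = 2 * nu a + 1 := by
  have h1 := nu_pow a; have h2 := nu_pow (a+1)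
  have : 2^(a+1) = 2 * 2^a := by ring
  omega

lemma nu_one : nu 1 = 1 := rfl

lemma tau_le {m : ℕ} {P N : Multiset ℕ} (h : IsSABP m P N) :
    tau m ≤ P.card + N.card :=
  Nat.sInf_le ⟨P, N, h, rfl⟩

lemma tau_spec (m : ℕ) : ∃ P N : Multiset ℕ, IsSABP m P N ∧ P.card + N.card = tau m := by
  have hne : {k | ∃ P N : Multiset ℕ, IsSABP m P N ∧ P.card + N.card = k}.Nonempty := by
    refine ⟨m + 0, Multiset.replicate m 1, 0, ⟨?_, ?_, ?_⟩, ?_⟩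
    · intro i hi; rw [Multiset.eq_of_mem_replicate hi]
    · intro j hj; simp at hj
    · simp [Multiset.map_replicate, Multiset.sum_replicate, nu_one]
    · simp
  exact Nat.sInf_mem hne

lemma tau_add_right (m a : ℕ) (ha : 1 ≤ a) : tau (m + nu a) ≤ tau m + 1 := by
  obtain ⟨P, N, ⟨hP, hN, he⟩, hc⟩ := tau_spec m
  have h : IsSABP (m + nu a) (a ::ₘ P) N := by
    refine ⟨?_, hN, ?_⟩
    · intro i hi; rcases Multiset.mem_cons.mp hi with rfl | hi
      · exact ha
      · exact hP i hi
    · simp only [Multiset.map_cons, Multiset.sum_cons]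
      push_cast at he ⊢
      omega
  calc tau (m + nu a) ≤ (a ::ₘ P).card + N.card := tau_le h
    _ = tau m + 1 := by simp [Multiset.card_cons]; omega

lemma tau_sub (m a : ℕ) (ha : 1 ≤ a) : tau m ≤ tau (m + nu a) + 1 := by
  obtain ⟨P, N, ⟨hP, hN, he⟩, hc⟩ := tau_spec (m + nu a)
  have h : IsSABP m P (a ::ₘ N) := by
    refine ⟨hP, ?_, ?_⟩
    · intro j hj; rcases Multiset.mem_cons.mp hj with rfl | hj
      · exact ha
      · exact hN j hj
    · simp only [Multiset.map_cons, Multiset.sum_cons]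
      push_cast at he ⊢
      omega
  calc tau m ≤ P.card + (a ::ₘ N).card := tau_le h
    _ = tau (m + nu a) + 1 := by simp [Multiset.card_cons]; omega

lemma sum_range_nu (m : ℕ) : (Finset.range m).sum nu + m + 1 = 2^m := by
  induction m with
  | zero => simp
  | succ m ih =>
    rw [Finset.sum_range_succ, pow_succ, ← nu_pow m]
    have ih' : (∑ x ∈ Finset.range m, nu x) + m + 1 = 2^m := ih
    rw [← nu_pow m] at ih'
    omega

lemma sum_nu_bound (S : Multiset ℕ) (m : ℕ) (hnd : S.Nodup) (hb : ∀ a ∈ S, a < m) :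
    (S.map nu).sum + m + 1 ≤ 2^m := by
  have hsub : S.toFinset ⊆ Finset.range m := by
    intro a ha
    simp only [Finset.mem_range]
    exact hb a (Multiset.mem_toFinset.mp ha)
  have h1 : (S.map nu).sum = S.toFinset.sum nu := by
    rw [Finset.sum]
    congr 1
    rw [Multiset.toFinset_val, Multiset.dedup_eq_self.mpr hnd]
  have h2 : S.toFinset.sum nu ≤ (Finset.range m).sum nu :=
    Finset.sum_le_sum_of_subset hsub
  have h3 := sum_range_nu m
  omega

lemma main_dual (k : ℕ) : ∀ (L n gn : ℕ) (P N : Multiset ℕ), 1 ≤ L → 2^L ≤ n →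
    n + 2 ≤ 2^(L+1) → gn + n + 2 = 2^L + 2^(L+1) → IsSABP n P N →
    P.card + N.card = k → tau gn ≤ k := by
  induction k using Nat.strong_induction_on with
  | _ k IH =>
  intro L n gn P N hL hn1 hn2 hg hsabp hk
  obtain ⟨hP, hN, he⟩ := hsabp
  have hpowL : nu L + 1 = 2^L := nu_pow L
  have hpowL1 : nu (L+1) + 1 = 2^(L+1) := nu_pow (L+1)
  have hpow2 : (2:ℕ)^(L+1) = 2*2^L := by ring
  have h2L : 2 ≤ 2^L := by
    calc 2 = 2^1 := rfl
    _ ≤ 2^L := Nat.pow_le_pow_right (by norm_num) hL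
  -- k ≥ 2
  have hk2 : 2 ≤ k := by
    by_contra hlt
    have hsum : (P.map nu).sum = n + (N.map nu).sum := by omega
    rcases Multiset.empty_or_exists_mem P with rfl | ⟨x, hx⟩
    · simp at hsum; omega
    · -- P.card ≥ 1, so P.card = 1, N = 0
      have hPc : P.card = 1 := by
        have := Multiset.card_pos_iff_exists_mem.mpr ⟨x, hx⟩
        omega
      obtain ⟨a, rfl⟩ := Multiset.card_eq_one.mp hPc
      have hNc : N = 0 := by
        have : N.card = 0 := by omega
        exact Multiset.card_eq_zero.mp this
      subst hNc
      simp at hsum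
      -- n = nu a with 2^L ≤ n ≤ 2^(L+1) - 2
      have hpa : nu a + 1 = 2^a := nu_pow a
      have hLa : L < a := by
        by_contra hc
        have : 2^a ≤ 2^L := Nat.pow_le_pow_right (by norm_num) (by omega)
        omega
      have : 2^(L+1) ≤ 2^a := Nat.pow_le_pow_right (by norm_num) (by omega)
      omega
  by_cases hbd : n = 2^L ∨ n + 2 = 2^(L+1)
  · -- boundary cases: tau gn ≤ 2
    have h2 : tau gn ≤ 2 := by
      rcases hbd with hb | hb
      · have hs : IsSABP gn {L+1} {1} := by
          refine ⟨?_, ?_, ?_⟩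
          · intro i hi; simp at hi; omega
          · intro j hj; simp at hj; omega
          · simp only [Multiset.map_singleton, Multiset.sum_singleton]
            have h11 : nu 1 = 1 := rfl
            omega
        have := tau_le hs
        simpa using this
      · have hs : IsSABP gn {L+1} {L} := by
          refine ⟨?_, ?_, ?_⟩
          · intro i hi; simp at hi; omega
          · intro j hj; simp at hj; omega
          · simp only [Multiset.map_singleton, Multiset.sum_singleton]
            omega
        have := tau_le hs
        simpa using this
    omega
  push_neg at hbd
  have hn1' : 2^L + 1 ≤ n := by omega
  have hn2' : n + 3 ≤ 2^(L+1) := by omega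
  -- case (a): L ∈ P
  by_cases hLP : L ∈ P
  · obtain ⟨P', rfl⟩ := Multiset.exists_cons_of_mem hLP
    refine le_trans (tau_le (show IsSABP gn ((L+1) ::ₘ N) P' from ?_)) ?_
    · refine ⟨?_, ?_, ?_⟩
      · intro i hi; rcases Multiset.mem_cons.mp hi with rfl | hi
        · omega
        · exact hN i hi
      · intro j hj; exact hP j (Multiset.mem_cons_of_mem hj)
      · simp only [Multiset.map_cons, Multiset.sum_cons] at he ⊢
        push_cast at he ⊢
        omega
    · simp only [Multiset.card_cons] at hk ⊢
      omega
  -- case (b): L+1 ∈ P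
  by_cases hL1P : L+1 ∈ P
  · obtain ⟨P', rfl⟩ := Multiset.exists_cons_of_mem hL1P
    refine le_trans (tau_le (show IsSABP gn (L ::ₘ N) P' from ?_)) ?_
    · refine ⟨?_, ?_, ?_⟩
      · intro i hi; rcases Multiset.mem_cons.mp hi with rfl | hi
        · omega
        · exact hN i hi
      · intro j hj; exact hP j (Multiset.mem_cons_of_mem hj)
      · simp only [Multiset.map_cons, Multiset.sum_cons] at he ⊢
        push_cast at he ⊢
        omega
    · simp only [Multiset.card_cons] at hk ⊢
      omega
  -- case (c): 1 ∈ P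
  by_cases h1P : 1 ∈ P
  · obtain ⟨P', rfl⟩ := Multiset.exists_cons_of_mem h1P
    obtain ⟨n', rfl⟩ : ∃ n', n = n' + 1 := ⟨n - 1, by omega⟩
    simp only [Multiset.card_cons] at hk
    have hrep : IsSABP n' P' N := by
      refine ⟨fun i hi => hP i (Multiset.mem_cons_of_mem hi), hN, ?_⟩
      simp only [Multiset.map_cons, Multiset.sum_cons] at he
      have h11 : nu 1 = 1 := rfl
      push_cast at he ⊢
      omega
    have hIH := IH (k-1) (by omega) L n' (gn+1) P' N hL (by omega) (by omega)
      (by omega) hrep (by omega)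
    have := tau_sub gn 1 le_rfl
    have h11 : nu 1 = 1 := rfl
    rw [h11] at this
    omega
  -- case (d): 1 ∈ N
  by_cases h1N : 1 ∈ N
  · obtain ⟨N', rfl⟩ := Multiset.exists_cons_of_mem h1N
    obtain ⟨gn', rfl⟩ : ∃ gn', gn = gn' + 1 := ⟨gn - 1, by omega⟩
    simp only [Multiset.card_cons] at hk
    have hrep : IsSABP (n+1) P N' := by
      refine ⟨hP, fun j hj => hN j (Multiset.mem_cons_of_mem hj), ?_⟩
      simp only [Multiset.map_cons, Multiset.sum_cons] at he
      have h11 : nu 1 = 1 := rfl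
      push_cast at he ⊢
      omega
    have hIH := IH (k-1) (by omega) L (n+1) gn' P N' hL (by omega) (by omega)
      (by omega) hrep (by omega)
    have := tau_add_right gn' 1 le_rfl
    have h11 : nu 1 = 1 := rfl
    rw [h11] at this
    omega
  -- case (e): common element
  by_cases hcomm : ∃ a, a ∈ P ∧ a ∈ N
  · obtain ⟨a, haP, haN⟩ := hcomm
    obtain ⟨N', rfl⟩ := Multiset.exists_cons_of_mem haN
    obtain ⟨P', rfl⟩ := Multiset.exists_cons_of_mem haP
    refine le_trans (tau_le (show IsSABP gn (L ::ₘ (L+1) ::ₘ N') P' from ?_)) ?_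
    · refine ⟨?_, ?_, ?_⟩
      · intro i hi
        rcases Multiset.mem_cons.mp hi with rfl | hi
        · omega
        · rcases Multiset.mem_cons.mp hi with rfl | hi
          · omega
          · exact hN i (Multiset.mem_cons_of_mem hi)
      · intro j hj; exact hP j (Multiset.mem_cons_of_mem hj)
      · simp only [Multiset.map_cons, Multiset.sum_cons] at he ⊢
        push_cast at he ⊢
        omega
    · simp only [Multiset.card_cons] at hk ⊢
      omega
  -- case (f): duplicate in P
  by_cases hdP : ∃ a, 2 ≤ P.count a
  · obtain ⟨a, ha2⟩ := hdP
    have haP : a ∈ P := by rw [← Multiset.count_pos]; omega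
    have ha1 : 1 ≤ a := hP a haP
    have hle : (a ::ₘ a ::ₘ 0) ≤ P := by
      rw [Multiset.le_iff_count]
      intro b
      by_cases hba : b = a
      · subst hba
        simp only [Multiset.count_cons_self, Multiset.count_zero]
        omega
      · simp [Multiset.count_cons, hba]
    obtain ⟨P₂, rfl⟩ := Multiset.le_iff_exists_add.mp hle
    obtain ⟨gn', rfl⟩ : ∃ gn', gn = gn' + 1 := ⟨gn - 1, by omega⟩
    have hrep : IsSABP (n+1) ((a+1) ::ₘ P₂) N := by
      refine ⟨?_, hN, ?_⟩
      · intro i hi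
        rcases Multiset.mem_cons.mp hi with rfl | hi
        · omega
        · exact hP i (Multiset.mem_add.mpr (Or.inr hi))
      · have hns := nu_succ a
        simp only [Multiset.map_add, Multiset.sum_add, Multiset.map_cons,
          Multiset.sum_cons, Multiset.map_zero, Multiset.sum_zero] at he ⊢
        push_cast at he ⊢
        omega
    have hcard : P₂.card + 2 + N.card = k := by
      simp only [Multiset.card_add, Multiset.card_cons, Multiset.card_zero] at hk
      omega
    have hIH := IH (k-1) (by omega) L (n+1) gn' ((a+1) ::ₘ P₂) N hL (by omega)
      (by omega) (by omega) hrep (by simp only [Multiset.card_cons]; omega)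
    have := tau_add_right gn' 1 le_rfl
    have h11 : nu 1 = 1 := rfl
    rw [h11] at this
    omega
  -- case (g): duplicate in N
  by_cases hdN : ∃ a, 2 ≤ N.count a
  · obtain ⟨a, ha2⟩ := hdN
    have haN : a ∈ N := by rw [← Multiset.count_pos]; omega
    have ha1 : 1 ≤ a := hN a haN
    have hle : (a ::ₘ a ::ₘ 0) ≤ N := by
      rw [Multiset.le_iff_count]
      intro b
      by_cases hba : b = a
      · subst hba
        simp only [Multiset.count_cons_self, Multiset.count_zero]
        omega
      · simp [Multiset.count_cons, hba]
    obtain ⟨N₂, rfl⟩ := Multiset.le_iff_exists_add.mp hle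
    obtain ⟨n', rfl⟩ : ∃ n', n = n' + 1 := ⟨n - 1, by omega⟩
    have hrep : IsSABP n' P ((a+1) ::ₘ N₂) := by
      refine ⟨hP, ?_, ?_⟩
      · intro j hj
        rcases Multiset.mem_cons.mp hj with rfl | hj
        · omega
        · exact hN j (Multiset.mem_add.mpr (Or.inr hj))
      · have hns := nu_succ a
        simp only [Multiset.map_add, Multiset.sum_add, Multiset.map_cons,
          Multiset.sum_cons, Multiset.map_zero, Multiset.sum_zero] at he ⊢
        push_cast at he ⊢
        omega
    have hcard : P.card + (N₂.card + 2) = k := by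
      simp only [Multiset.card_add, Multiset.card_cons, Multiset.card_zero] at hk
      omega
    have hIH := IH (k-1) (by omega) L n' (gn+1) P ((a+1) ::ₘ N₂) hL (by omega)
      (by omega) (by omega) hrep (by simp only [Multiset.card_cons]; omega)
    have := tau_sub gn 1 le_rfl
    have h11 : nu 1 = 1 := rfl
    rw [h11] at this
    omega
  -- case (h): all distinct, disjoint, no 1, no L, no L+1 in P
  push_neg at hcomm hdP hdN
  have hndP : P.Nodup := Multiset.nodup_iff_count_le_one.mpr (fun a => by have := hdP a; omega)
  have hndN : N.Nodup := Multiset.nodup_iff_count_le_one.mpr (fun a => by have := hdN a; omega)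
  have hsum : (P.map nu).sum = n + (N.map nu).sum := by omega
  have hPne : ∃ x, x ∈ P := by
    rcases Multiset.empty_or_exists_mem P with rfl | h
    · simp at hsum; omega
    · exact h
  have hFne : (P + N).toFinset.Nonempty := by
    obtain ⟨x, hx⟩ := hPne
    exact ⟨x, Multiset.mem_toFinset.mpr (Multiset.mem_add.mpr (Or.inl hx))⟩
  obtain ⟨M, hMmem, hMP, hMN⟩ : ∃ M, (M ∈ P ∨ M ∈ N) ∧ (∀ a ∈ P, a ≤ M) ∧
      (∀ a ∈ N, a ≤ M) := by
    refine ⟨(P + N).toFinset.max' hFne, ?_, ?_, ?_⟩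
    · have := (P + N).toFinset.max'_mem hFne
      rw [Multiset.mem_toFinset, Multiset.mem_add] at this
      exact this
    · exact fun a ha =>
        Finset.le_max' _ a (Multiset.mem_toFinset.mpr (Multiset.mem_add.mpr (Or.inl ha)))
    · exact fun a ha =>
        Finset.le_max' _ a (Multiset.mem_toFinset.mpr (Multiset.mem_add.mpr (Or.inr ha)))
  rcases hMmem with hMinP | hMinN
  · -- M ∈ P
    by_cases hML : M ≤ L + 1
    · -- M < L: contradiction
      exfalso
      have hMltL : M < L := by
        have h1 : M ≠ L := fun h => hLP (h ▸ hMinP)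
        have h2 : M ≠ L + 1 := fun h => hL1P (h ▸ hMinP)
        omega
      have hb := sum_nu_bound P L hndP (fun a ha => by have := hMP a ha; omega)
      omega
    · -- M ≥ L+2
      obtain ⟨M₀, rfl⟩ : ∃ M₀, M = M₀ + 1 := ⟨M - 1, by omega⟩
      by_cases hM0N : M₀ ∈ N
      · -- rewrite nu(M₀+1) - nu(M₀) = nu(M₀) + 1
        obtain ⟨P₂, rfl⟩ := Multiset.exists_cons_of_mem hMinP
        obtain ⟨N₂, rfl⟩ := Multiset.exists_cons_of_mem hM0N
        obtain ⟨n', rfl⟩ : ∃ n', n = n' + 1 := ⟨n - 1, by omega⟩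
        have hrep : IsSABP n' (M₀ ::ₘ P₂) N₂ := by
          refine ⟨?_, fun j hj => hN j (Multiset.mem_cons_of_mem hj), ?_⟩
          · intro i hi
            rcases Multiset.mem_cons.mp hi with rfl | hi
            · omega
            · exact hP i (Multiset.mem_cons_of_mem hi)
          · have hns := nu_succ M₀
            simp only [Multiset.map_cons, Multiset.sum_cons] at he ⊢
            push_cast at he ⊢
            omega
        simp only [Multiset.card_cons] at hk
        have hIH := IH (k-1) (by omega) L n' (gn+1) (M₀ ::ₘ P₂) N₂ hL (by omega)
          (by omega) (by omega) hrep (by simp only [Multiset.card_cons]; omega)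
        have := tau_sub gn 1 le_rfl
        have h11 : nu 1 = 1 := rfl
        rw [h11] at this
        omega
      · -- contradiction by counting
        exfalso
        have hbN := sum_nu_bound N M₀ hndN (fun a ha => by
          have h1 := hMN a ha
          have h2 : a ≠ M₀ + 1 := fun h => (hcomm (M₀+1)) (h ▸ hMinP) (h ▸ ha)
          have h3 : a ≠ M₀ := fun h => hM0N (h ▸ ha)
          omega)
        obtain ⟨P₂, rfl⟩ := Multiset.exists_cons_of_mem hMinP
        have hSP : nu (M₀+1) ≤ (Multiset.map nu ((M₀+1) ::ₘ P₂)).sum := by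
          simp only [Multiset.map_cons, Multiset.sum_cons]
          omega
        have hxx : 2^(L+1) ≤ 2^M₀ := Nat.pow_le_pow_right (by norm_num) (by omega)
        have hpM : nu M₀ + 1 = 2^M₀ := nu_pow M₀
        have hpM1 : nu (M₀+1) + 1 = 2^(M₀+1) := nu_pow (M₀+1)
        have hpp : (2:ℕ)^(M₀+1) = 2*2^M₀ := by ring
        omega
  · -- M ∈ N : contradiction
    exfalso
    have hbP := sum_nu_bound P M hndP (fun a ha => by
      have h1 := hMP a ha
      have h2 : a ≠ M := fun h => (hcomm a) ha (h ▸ hMinN)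
      omega)
    obtain ⟨N₂, rfl⟩ := Multiset.exists_cons_of_mem hMinN
    have hSN : nu M ≤ (Multiset.map nu (M ::ₘ N₂)).sum := by
      simp only [Multiset.map_cons, Multiset.sum_cons]
      omega
    have hpM : nu M + 1 = 2^M := nu_pow M
    omega

theorem stmt7 (n : ℕ) (hn : 1 ≤ n) : tau n = tau (dualf n) := by
  by_cases hc : ∃ k : ℕ, 1 ≤ k ∧ n = 2 ^ k - 1
  · rw [dualf, if_pos hc]
  · rw [dualf, if_neg hc]
    have hn2 : 2 ≤ n := by
      rcases Nat.lt_or_ge n 2 with h | h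
      · exact absurd ⟨1, le_rfl, by omega⟩ hc
      · exact h
    set L := Nat.log 2 n with hLdef
    have hL1 : 1 ≤ L := Nat.log_pos (by norm_num) hn2
    have hlow : 2^L ≤ n := Nat.pow_log_le_self 2 (by omega)
    have hhigh : n < 2^(L+1) := Nat.lt_pow_succ_log_self (by norm_num) n
    have hne : n ≠ 2^(L+1) - 1 := fun h => hc ⟨L+1, by omega, h⟩
    have hup : n + 2 ≤ 2^(L+1) := by
      have := Nat.one_le_two_pow (n := L+1); omega
    set gn := 3 * 2^L - n - 2 with hgn
    have hpow2 : (2:ℕ)^(L+1) = 2*2^L := by ring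
    have hg : gn + n + 2 = 2^L + 2^(L+1) := by omega
    obtain ⟨P, N, hs, hcard⟩ := tau_spec n
    have h1 : tau gn ≤ tau n := main_dual (tau n) L n gn P N hL1 hlow hup hg hs hcard
    have hglow : 2^L ≤ gn := by omega
    have hgup : gn + 2 ≤ 2^(L+1) := by omega
    obtain ⟨P2, N2, hs2, hcard2⟩ := tau_spec gn
    have h2 : tau n ≤ tau gn :=
      main_dual (tau gn) L gn n P2 N2 hL1 hglow hgup (by omega) hs2 hcard2
    omega
end

section
/- Suppose (P, N) is a signed almost binary partition of n satisfying: P ∩ N = ∅, P and N are the greedy partitions of their sums, and max(P) = ⌊log₂ n⌋ + 1 + c for some c > 0. Then ⌊log₂ n⌋ + c ∈ N. -/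
lemma greedy_head (s : ℕ) (hs : 1 ≤ s) : Nat.log 2 (s + 1) ∈ greedy s := by
  cases s with
  | zero => omega
  | succ t => rw [greedy]; exact Multiset.mem_cons_self _ _

theorem stmt10 (n : ℕ) (hn : 1 ≤ n) (P N : Multiset ℕ) (c : ℕ) (hc : 0 < c)
    (hsabp : IsSABP n P N) (hdisj : ∀ i, i ∈ P → i ∉ N)
    (hP : P = greedy ((P.map nu).sum)) (hN : N = greedy ((N.map nu).sum))
    (m : ℕ) (hm : m ∈ P) (hmax : ∀ i ∈ P, i ≤ m)
    (hval : m = Nat.log 2 n + 1 + c) :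
    Nat.log 2 n + c ∈ N := by
  have hL := Nat.lt_pow_succ_log_self (b := 2) (by norm_num) n
  set L := Nat.log 2 n with hLdef
  set A := (P.map nu).sum with hA
  set B := (N.map nu).sum with hB
  have hAB : A = n + B := by have := hsabp.2.2; omega
  have hmnu : nu m ∈ P.map nu := Multiset.mem_map_of_mem _ hm
  have hAge : nu m ≤ A := Multiset.single_le_sum (fun x _ => Nat.zero_le x) _ hmnu
  have hm2 : 2 ≤ m := by omega
  have hpm : (2:ℕ) ^ m = 2 * 2 ^ (m - 1) := by
    rw [← pow_succ']; congr 1; omega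
  have hpm1 : (2:ℕ) ^ (m + 1) = 2 * 2 ^ m := by rw [pow_succ]; ring
  have h1m : (1:ℕ) ≤ 2 ^ (m-1) := Nat.one_le_two_pow
  have hnum : nu m = 2 ^ m - 1 := rfl
  have hA1 : 1 ≤ A := by omega
  have hheadP : Nat.log 2 (A + 1) ∈ P := by rw [hP]; exact greedy_head A hA1
  have hlogA : Nat.log 2 (A + 1) ≤ m := hmax _ hheadP
  have hAlt : A + 1 < 2 ^ (m + 1) := by
    calc A + 1 < 2 ^ (Nat.log 2 (A+1) + 1) := Nat.lt_pow_succ_log_self (by norm_num) _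
    _ ≤ 2 ^ (m + 1) := Nat.pow_le_pow_right (by norm_num) (by omega)
  have hnlt : n < 2 ^ (m - 1) := by
    calc n < 2 ^ (L + 1) := hL
    _ ≤ 2 ^ (m - 1) := Nat.pow_le_pow_right (by norm_num) (by omega)
  have hBge : 2 ^ (m - 1) ≤ B := by omega
  have hB1 : 1 ≤ B := by omega
  have hheadN : Nat.log 2 (B + 1) ∈ N := by rw [hN]; exact greedy_head B hB1
  have hlogNge : m - 1 ≤ Nat.log 2 (B + 1) := by
    rw [Nat.le_log_iff_pow_le (by norm_num) (by omega)]; omega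
  have hlogNlt : Nat.log 2 (B + 1) < m + 1 := by
    apply Nat.log_lt_of_lt_pow (by omega); omega
  have hne : Nat.log 2 (B + 1) ≠ m := by
    intro h; exact hdisj m hm (h ▸ hheadN)
  have : Nat.log 2 (B + 1) = L + c := by omega
  rwa [this] at hheadN
end

section
/- τ(n) = min over 0 ≤ v ≤ n of (τ_P(v) + τ_C(n − v)), with the conventions τ_P(0) = 0 and τ_C(0) = 0 excluded appropriately (i.e., the minimum is over splittings n = v + w with v, w ≥ 0, using τ_P(v) for a sum-only part and τ_C(w) for a single-positive-part representation). -/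
-- ### basic nu facts
lemma nu_add_one (d : ℕ) : nu d + 1 = 2 ^ d := by
  have : 1 ≤ 2 ^ d := Nat.one_le_two_pow
  simp only [nu]; omega

-- ### binary digit sum
def s2 : ℕ → ℕ
  | 0 => 0
  | (n+1) => (n+1) % 2 + s2 ((n+1)/2)
  decreasing_by omega

lemma s2_zero : s2 0 = 0 := by rw [s2]

lemma s2_def (n : ℕ) (h : n ≠ 0) : s2 n = n % 2 + s2 (n / 2) := by
  obtain ⟨m, rfl⟩ := Nat.exists_eq_succ_of_ne_zero h
  rw [s2]

lemma s2_two_mul (n : ℕ) : s2 (2 * n) = s2 n := by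
  rcases Nat.eq_zero_or_pos n with rfl | h
  · simp
  · rw [s2_def (2*n) (by omega)]
    have h1 : (2*n) % 2 = 0 := by omega
    have h2 : (2*n) / 2 = n := by omega
    rw [h1, h2]; omega

lemma s2_two_mul_add_one (n : ℕ) : s2 (2 * n + 1) = s2 n + 1 := by
  rw [s2_def _ (by omega)]
  have h1 : (2*n+1) % 2 = 1 := by omega
  have h2 : (2*n+1) / 2 = n := by omega
  rw [h1, h2]; omega

lemma s2_le_self (n : ℕ) : s2 n ≤ n := by
  induction n using Nat.strong_induction_on with
  | _ n ih =>
    rcases Nat.eq_zero_or_pos n with rfl | h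
    · simp [s2_zero]
    · rw [s2_def n (by omega)]
      have := ih (n/2) (by omega)
      omega

lemma s2_pos (n : ℕ) (h : n ≠ 0) : 1 ≤ s2 n := by
  induction n using Nat.strong_induction_on with
  | _ n ih =>
    rw [s2_def n h]
    rcases Nat.even_or_odd n with he | ho
    · have he' : n % 2 = 0 := Nat.even_iff.mp he
      have h2 : n / 2 ≠ 0 := by omega
      have := ih (n/2) (by omega) h2
      omega
    · have : n % 2 = 1 := Nat.odd_iff.mp ho
      omega

lemma s2_one : s2 1 = 1 := by
  have := s2_two_mul_add_one 0; simpa [s2_zero] using this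

lemma s2_two : s2 2 = 1 := by
  have := s2_two_mul 1; simpa [s2_one] using this

lemma s2_three : s2 3 = 2 := by
  have := s2_two_mul_add_one 1; simpa [s2_one] using this

lemma s2_succ_le (a : ℕ) : s2 (a+1) ≤ s2 a + 1 := by
  induction a using Nat.strong_induction_on with
  | _ a ih =>
    rcases Nat.even_or_odd a with he | ho
    · obtain ⟨k, rfl⟩ := he
      have h1 : s2 (k+k+1) = s2 k + 1 := by
        rw [show k+k+1 = 2*k+1 by ring, s2_two_mul_add_one]
      have h2 : s2 (k+k) = s2 k := by rw [show k+k = 2*k by ring, s2_two_mul]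
      omega
    · obtain ⟨k, rfl⟩ := ho
      have h1 : s2 (2*k+1) = s2 k + 1 := s2_two_mul_add_one k
      have h2 : s2 (2*k+1+1) = s2 (k+1) := by
        rw [show 2*k+1+1 = 2*(k+1) by ring, s2_two_mul]
      have := ih k (by omega)
      omega

lemma s2_add_pow (d : ℕ) : ∀ a, s2 (a + 2^d) ≤ s2 a + 1 := by
  induction d with
  | zero => intro a; simpa using s2_succ_le a
  | succ d ih =>
    intro a
    rcases Nat.even_or_odd a with he | ho
    · obtain ⟨k, rfl⟩ := he
      have h : k + k + 2^(d+1) = 2*(k + 2^d) := by rw [pow_succ]; ring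
      rw [h, s2_two_mul, show k+k = 2*k by ring, s2_two_mul]
      exact ih k
    · obtain ⟨k, rfl⟩ := ho
      have h : 2*k+1 + 2^(d+1) = 2*(k + 2^d) + 1 := by rw [pow_succ]; ring
      rw [h, s2_two_mul_add_one, s2_two_mul_add_one]
      have := ih k; omega

lemma s2_split : ∀ L a c, c < 2^L → s2 (a * 2^L + c) = s2 a + s2 c := by
  intro L
  induction L with
  | zero =>
    intro a c hc
    interval_cases c
    simp [s2_zero]
  | succ L ih =>
    intro a c hc
    rcases Nat.even_or_odd c with he | ho
    · obtain ⟨k, rfl⟩ := he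
      have h : a * 2^(L+1) + (k+k) = 2*(a*2^L + k) := by rw [pow_succ]; ring
      have hk : k < 2^L := by rw [pow_succ] at hc; omega
      rw [h, s2_two_mul, ih a k hk, show k+k = 2*k by ring, s2_two_mul]
    · obtain ⟨k, rfl⟩ := ho
      have h : a * 2^(L+1) + (2*k+1) = 2*(a*2^L + k) + 1 := by rw [pow_succ]; ring
      have hk : k < 2^L := by rw [pow_succ] at hc; omega
      rw [h, s2_two_mul_add_one, ih a k hk, s2_two_mul_add_one]
      ring

-- ### sums of k powers of two (each ≥ 2)
lemma pt1 : ∀ m, 2 ∣ m → ∃ D : Multiset ℕ,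
    (∀ d ∈ D, 1 ≤ d) ∧ D.card = s2 m ∧ (D.map (fun d => 2^d)).sum = m := by
  intro m
  induction m using Nat.strong_induction_on with
  | _ m ih =>
    intro hm
    rcases Nat.eq_zero_or_pos m with rfl | h0
    · exact ⟨0, by simp, by simp [s2_zero], by simp⟩
    obtain ⟨h, rfl⟩ := hm
    have hh : 1 ≤ h := by omega
    rcases Nat.even_or_odd h with he | hodd
    · obtain ⟨k, rfl⟩ := he
      obtain ⟨D, hD1, hD2, hD3⟩ := ih (k+k) (by omega) ⟨k, by ring⟩
      refine ⟨D.map (·+1), ?_, ?_, ?_⟩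
      · intro d hd
        obtain ⟨e, _, rfl⟩ := Multiset.mem_map.mp hd
        omega
      · rw [Multiset.card_map, hD2, show 2*(k+k) = 2*(k+k) from rfl]
        rw [s2_two_mul]
      · rw [Multiset.map_map]
        have : ((fun d => 2^d) ∘ (·+1)) = (fun d => 2 * 2^d) := by
          funext d; simp [pow_succ]; ring
        rw [this, Multiset.sum_map_mul_left, hD3]
    · obtain ⟨k, rfl⟩ := hodd
      rcases Nat.eq_zero_or_pos k with rfl | hk
      · refine ⟨{1}, by simp, ?_, by simp⟩
        simpa using s2_two.symm
      obtain ⟨D, hD1, hD2, hD3⟩ := ih (4*k) (by omega) ⟨2*k, by ring⟩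
      refine ⟨1 ::ₘ D, ?_, ?_, ?_⟩
      · intro d hd
        rcases Multiset.mem_cons.mp hd with rfl | hd'
        · exact le_refl 1
        · exact hD1 d hd'
      · rw [Multiset.card_cons, hD2]
        have h4 : s2 (4*k) = s2 k := by
          rw [show 4*k = 2*(2*k) by ring, s2_two_mul, s2_two_mul]
        have hm : s2 (2*(2*k+1)) = s2 k + 1 := by
          rw [s2_two_mul, s2_two_mul_add_one]
        omega
      · rw [Multiset.map_cons, Multiset.sum_cons, hD3]
        ring

lemma pt_exists (m k : ℕ) (hm : 2 ∣ m) (h1 : s2 m ≤ k) (h2 : 2 * k ≤ m) :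
    ∃ D : Multiset ℕ, (∀ d ∈ D, 1 ≤ d) ∧ D.card = k ∧ (D.map (fun d => 2^d)).sum = m := by
  obtain ⟨t, rfl⟩ : ∃ t, k = s2 m + t := ⟨k - s2 m, by omega⟩
  clear h1
  induction t with
  | zero => simpa using pt1 m hm
  | succ t ih =>
    obtain ⟨D, hD1, hD2, hD3⟩ := ih (by omega)
    have hex : ∃ d ∈ D, 2 ≤ d := by
      by_contra hno
      push_neg at hno
      have hall : ∀ d ∈ D, d = 1 := fun d hd => by
        have := hD1 d hd; have := hno d hd; omega
      have hrep : D = Multiset.replicate D.card 1 := Multiset.eq_replicate_card.mpr hall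
      have : (D.map (fun d => 2^d)).sum = 2 * D.card := by
        rw [hrep]; simp [Multiset.map_replicate, Multiset.sum_replicate, mul_comm]
      omega
    obtain ⟨d, hd, hd2⟩ := hex
    have hde : d ::ₘ D.erase d = D := Multiset.cons_erase hd
    refine ⟨(d-1) ::ₘ (d-1) ::ₘ D.erase d, ?_, ?_, ?_⟩
    · intro e he
      rcases Multiset.mem_cons.mp he with rfl | he'
      · omega
      rcases Multiset.mem_cons.mp he' with rfl | he''
      · omega
      · exact hD1 e (by rw [← hde]; exact Multiset.mem_cons_of_mem he'')
    · have : (D.erase d).card = D.card - 1 := by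
        rw [← hde]; simp
      simp only [Multiset.card_cons, this]
      have hcard : 1 ≤ D.card := by
        rw [← hde]; simp
      omega
    · have hsum : (D.map (fun d => 2^d)).sum
          = 2^d + ((D.erase d).map (fun d => 2^d)).sum := by
        conv_lhs => rw [← hde]
        rw [Multiset.map_cons, Multiset.sum_cons]
      simp only [Multiset.map_cons, Multiset.sum_cons]
      have hpow : 2^(d-1) + 2^(d-1) = 2^d := by
        have h' : 2^d = 2^(d-1) * 2 := by
          conv_lhs => rw [show d = (d-1)+1 by omega]
          rw [pow_succ]
        omega
      omega

lemma s2_sum_le (D : Multiset ℕ) : s2 ((D.map (fun d => 2^d)).sum) ≤ D.card := by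
  induction D using Multiset.induction with
  | empty => simp [s2_zero]
  | cons d D ih =>
    rw [Multiset.map_cons, Multiset.sum_cons, Multiset.card_cons]
    have h1 : s2 (2^d + (D.map (fun d => 2^d)).sum)
        ≤ s2 ((D.map (fun d => 2^d)).sum) + 1 := by
      rw [add_comm]; exact s2_add_pow d _
    omega

lemma sum_pow_even_s11 (D : Multiset ℕ) (h : ∀ d ∈ D, 1 ≤ d) :
    2 ∣ (D.map (fun d => 2^d)).sum := by
  induction D using Multiset.induction with
  | empty => simp
  | cons d D ih =>
    rw [Multiset.map_cons, Multiset.sum_cons]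
    have h1 : 1 ≤ d := h d (Multiset.mem_cons_self d D)
    have h2 : 2 ∣ 2^d := dvd_pow_self 2 (by omega)
    have h3 := ih (fun e he => h e (Multiset.mem_cons_of_mem he))
    exact dvd_add h2 h3

lemma nu_sum_add_card (D : Multiset ℕ) :
    (D.map nu).sum + D.card = (D.map (fun d => 2^d)).sum := by
  induction D using Multiset.induction with
  | empty => simp
  | cons d D ih =>
    simp only [Multiset.map_cons, Multiset.sum_cons, Multiset.card_cons]
    have := nu_add_one d
    omega

-- ### tauP basics
lemma abp_mem {v : ℕ} {Q : Multiset ℕ} (h : IsABP v Q) : tauP v ≤ Q.card :=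
  Nat.sInf_le ⟨Q, h, rfl⟩

lemma abp_replicate (v : ℕ) : IsABP v (Multiset.replicate v 1) := by
  constructor
  · intro i hi; rw [Multiset.eq_of_mem_replicate hi]
  · rw [Multiset.map_replicate, Multiset.sum_replicate]
    simp [nu]

lemma tauP_le_self (v : ℕ) : tauP v ≤ v := by
  have := abp_mem (abp_replicate v)
  simpa using this

lemma tauP_spec (v : ℕ) : ∃ Q, IsABP v Q ∧ Q.card = tauP v := by
  have h : {k | ∃ P, IsABP v P ∧ P.card = k}.Nonempty :=
    ⟨(Multiset.replicate v 1).card, Multiset.replicate v 1, abp_replicate v, rfl⟩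
  exact Nat.sInf_mem h

lemma tauP_zero : tauP 0 = 0 := Nat.le_zero.mp (tauP_le_self 0)

lemma tauP_pos (v : ℕ) (h : 1 ≤ v) : 1 ≤ tauP v := by
  by_contra h0
  push_neg at h0
  obtain ⟨Q, hQ, hc⟩ := tauP_spec v
  have : Q.card = 0 := by omega
  have hQ0 : Q = 0 := Multiset.card_eq_zero.mp this
  rw [hQ0] at hQ
  have := hQ.2
  simp at this
  omega

-- ### greedy decrement
lemma greedy_dec (v : ℕ) (hv : 1 ≤ v) :
    tauP (v - nu (Nat.log 2 (v+1))) + 1 ≤ tauP v := by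
  set L := Nat.log 2 (v+1) with hLdef
  have hL1 : 1 ≤ L := Nat.log_pos one_lt_two (by omega)
  have hpow1 : 2^L ≤ v + 1 := Nat.pow_log_le_self 2 (by omega)
  have hpow2 : v + 1 < 2^(L+1) := Nat.lt_pow_succ_log_self one_lt_two _
  have hnuL : nu L + 1 = 2^L := nu_add_one L
  have hnuLv : nu L ≤ v := by omega
  obtain ⟨Q, hQ, hc⟩ := tauP_spec v
  set k := tauP v with hk
  have hk1 : 1 ≤ k := tauP_pos v hv
  have hkv : k ≤ v := tauP_le_self v
  have hsum : (Q.map (fun d => 2^d)).sum = v + k := by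
    rw [← nu_sum_add_card, hQ.2, hc]
  have hm2 : 2 ∣ (v + k) := by rw [← hsum]; exact sum_pow_even_s11 Q hQ.1
  have hsk : s2 (v + k) ≤ k := by
    have := s2_sum_le Q
    rw [hsum, hc] at this
    exact this
  -- k ≤ (v - nu L) + 1
  have hkb : k ≤ (v - nu L) + 1 := by
    have habp : IsABP v (L ::ₘ Multiset.replicate (v - nu L) 1) := by
      constructor
      · intro i hi
        rcases Multiset.mem_cons.mp hi with rfl | h'
        · exact hL1
        · rw [Multiset.eq_of_mem_replicate h']
      · rw [Multiset.map_cons, Multiset.sum_cons, Multiset.map_replicate,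
          Multiset.sum_replicate]
        simp [nu]
        omega
    have := abp_mem habp
    simp at this
    omega
  -- q, c decomposition
  set c := (v + k) % 2^L with hcdef
  set q := (v + k) / 2^L with hqdef
  have hpw : 0 < 2^L := Nat.pow_pos (by norm_num)
  have hqc : v + k = q * 2^L + c := by
    rw [hcdef, hqdef, mul_comm]
    exact (Nat.div_add_mod _ _).symm
  have hc_lt : c < 2^L := Nat.mod_lt _ hpw
  have hq1 : 1 ≤ q := by
    have h1 : 2^L ≤ v + k := by omega
    by_contra h
    push_neg at h
    interval_cases q
    omega
  have hq3 : q ≤ 3 := by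
    have h1 : v + k < 4 * 2^L := by
      have h2 : v ≤ 2^(L+1) - 2 := by omega
      have h3 : 2^(L+1) = 2 * 2^L := by rw [pow_succ]; ring
      omega
    by_contra h
    push_neg at h
    have : 4 * 2^L ≤ q * 2^L := Nat.mul_le_mul_right _ (by omega)
    omega
  have hsm : s2 (v + k) = s2 q + s2 c := by rw [hqc]; exact s2_split L q c hc_lt
  -- build abp of v' with k-1 elements
  have key : ∃ D : Multiset ℕ, (∀ d ∈ D, 1 ≤ d) ∧ D.card = k - 1 ∧
      (D.map (fun d => 2^d)).sum = (v - nu L) + (k - 1) := by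
    apply pt_exists
    · -- parity
      have h2L : 2 ∣ 2^L := dvd_pow_self 2 (by omega)
      have : (v - nu L) + (k-1) = (v + k) - 2^L := by omega
      rw [this]
      omega
    · -- digit bound
      have hm' : (v - nu L) + (k - 1) = (q-1) * 2^L + c := by
        have hq' : (q-1) * 2^L + 2^L = q * 2^L := by
          rw [Nat.sub_one_mul]
          have h'' : 2^L ≤ q * 2^L := Nat.le_mul_of_pos_left _ (by omega)
          omega
        omega
      rw [hm', s2_split L (q-1) c hc_lt]
      interval_cases q
      · -- q = 1
        rw [s2_one] at hsm
        simp [s2_zero]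
        omega
      · -- q = 2
        rw [s2_two] at hsm
        have hkc : c + 2 ≤ k := by
          have h3 : 2^(L+1) = 2 * 2^L := by rw [pow_succ]; ring
          have hv2 : v ≤ 2^(L+1) - 2 := by omega
          omega
        have := s2_le_self c
        rw [show (2:ℕ) - 1 = 1 from rfl, s2_one]
        omega
      · -- q = 3
        rw [s2_three] at hsm
        rw [show (3:ℕ) - 1 = 2 from rfl, s2_two]
        omega
    · omega
  obtain ⟨D, hD1, hD2, hD3⟩ := key
  have habp : IsABP (v - nu L) D := by
    refine ⟨hD1, ?_⟩
    have := nu_sum_add_card D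
    omega
  have := abp_mem habp
  omega

-- ### tauC helper
lemma tauC_le (w r : ℕ) (hr : 1 ≤ r) (N : Multiset ℕ) (hN : ∀ j ∈ N, 1 ≤ j)
    (heq : w + (N.map nu).sum = nu r) : tauC w ≤ 1 + N.card := by
  apply Nat.sInf_le
  refine ⟨r, N, ⟨?_, hN, ?_⟩, rfl⟩
  · intro i hi
    rw [Multiset.mem_singleton.mp hi]; exact hr
  · rw [Multiset.map_singleton, Multiset.sum_singleton]
    have := congrArg (Nat.cast : ℕ → ℤ) heq
    push_cast at this ⊢
    omega

lemma tauC0_zero : tauC0 0 = 0 := by simp [tauC0]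

lemma tauC0_pos (w : ℕ) (h : w ≠ 0) : tauC0 w = tauC w := by
  simp only [tauC0, if_neg h]

lemma nu_ge_self (w : ℕ) : w ≤ nu w := by
  have : w < 2 ^ w := Nat.lt_two_pow_self
  simp only [nu]; omega

lemma tauC_spec (w : ℕ) (hw : 1 ≤ w) :
    ∃ r N, IsSABP w {r} N ∧ 1 + N.card = tauC w := by
  have hne : {k | ∃ r N, IsSABP w {r} N ∧ 1 + N.card = k}.Nonempty := by
    refine ⟨1 + (Multiset.replicate (nu w - w) 1).card, w,
      Multiset.replicate (nu w - w) 1, ⟨?_, ?_, ?_⟩, rfl⟩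
    · intro i hi; rw [Multiset.mem_singleton.mp hi]; exact hw
    · intro j hj; rw [Multiset.eq_of_mem_replicate hj]
    · rw [Multiset.map_singleton, Multiset.sum_singleton, Multiset.map_replicate,
        Multiset.sum_replicate]
      have h1 := nu_ge_self w
      have : (nu w - w) • nu 1 = nu w - w := by simp [nu]
      rw [this]
      omega
  exact Nat.sInf_mem hne

-- ### main inequality
lemma star : ∀ B n : ℕ, 1 ≤ n →
    (Finset.range (n + 1)).inf' (by simp) (fun v => tauP v + tauC0 (n - v))
      ≤ tauP (n + B) + tauP B := by
  intro B
  induction B using Nat.strong_induction_on with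
  | _ B ih =>
    intro n hn
    rcases Nat.eq_zero_or_pos B with rfl | hB
    · have h1 : (Finset.range (n + 1)).inf' (by simp) (fun v => tauP v + tauC0 (n - v))
          ≤ tauP n + tauC0 (n - n) := Finset.inf'_le _ (by simp)
      rw [Nat.sub_self, tauC0_zero] at h1
      simpa [tauP_zero] using h1
    · set L := Nat.log 2 (n + B + 1) with hLdef
      have hL1 : 1 ≤ L := Nat.log_pos one_lt_two (by omega)
      have hpow1 : 2^L ≤ n + B + 1 := Nat.pow_log_le_self 2 (by omega)
      have hpow2 : n + B + 1 < 2^(L+1) := Nat.lt_pow_succ_log_self one_lt_two _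
      have hnuL : nu L + 1 = 2^L := nu_add_one L
      have hgd1 : tauP ((n+B) - nu L) + 1 ≤ tauP (n+B) := by
        have := greedy_dec (n+B) (by omega)
        rw [show n + B + 1 = n + B + 1 from rfl] at this
        exact this
      by_cases hcase : B ≤ nu L
      · -- single positive absorbs all negatives
        set v := n + B - nu L with hvdef
        have hnuLnB : nu L ≤ n + B := by omega
        have hvn : v ≤ n := by omega
        have hF : (Finset.range (n + 1)).inf' (by simp) (fun v => tauP v + tauC0 (n - v))
            ≤ tauP v + tauC0 (n - v) := Finset.inf'_le _ (by simp; omega)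
        have hw : n - v = nu L - B := by omega
        rcases Nat.eq_zero_or_pos (nu L - B) with h0 | hpos
        · rw [hw, h0, tauC0_zero] at hF
          omega
        · obtain ⟨NB, hNB, hNBc⟩ := tauP_spec B
          have hC : tauC (nu L - B) ≤ 1 + NB.card := by
            apply tauC_le _ L hL1 NB hNB.1
            rw [hNB.2]; omega
          rw [hw] at hF
          rw [tauC0_pos _ (by omega)] at hF
          omega
      · push_neg at hcase
        have hLB : Nat.log 2 (B+1) = L := by
          apply Nat.log_eq_of_pow_le_of_lt_pow
          · omega
          · omega
        have hgd2 : tauP (B - nu L) + 1 ≤ tauP B := by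
          have := greedy_dec B (by omega)
          rw [hLB] at this
          exact this
        have hlt : B - nu L < B := by omega
        have hIH := ih (B - nu L) hlt n hn
        have harr : n + (B - nu L) = (n + B) - nu L := by omega
        rw [harr] at hIH
        omega


theorem stmt11 (n : ℕ) (hn : 1 ≤ n) :
    tau n = (Finset.range (n + 1)).inf' (by simp) (fun v => tauP v + tauC0 (n - v)) := by
  apply le_antisymm
  · obtain ⟨v, hvmem, hveq⟩ := Finset.exists_mem_eq_inf' (by simp : (Finset.range (n+1)).Nonempty)
      (fun v => tauP v + tauC0 (n - v))
    rw [hveq]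
    have hvn : v ≤ n := by
      have := Finset.mem_range.mp hvmem; omega
    obtain ⟨Q, hQ, hQc⟩ := tauP_spec v
    rcases Nat.eq_zero_or_pos (n - v) with hw0 | hw
    · have hvn' : v = n := by omega
      apply Nat.sInf_le
      refine ⟨Q, 0, ⟨hQ.1, by simp, ?_⟩, ?_⟩
      · simp [hQ.2, hvn']
      · rw [Multiset.card_zero, add_zero, hQc, hw0, tauC0_zero, add_zero]
    · obtain ⟨r, N, hSN, hcard⟩ := tauC_spec (n - v) hw
      apply Nat.sInf_le
      refine ⟨r ::ₘ Q, N, ⟨?_, hSN.2.1, ?_⟩, ?_⟩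
      · intro i hi
        rcases Multiset.mem_cons.mp hi with rfl | h'
        · exact hSN.1 i (Multiset.mem_singleton_self i)
        · exact hQ.1 i h'
      · have h1 := hSN.2.2
        rw [Multiset.map_singleton, Multiset.sum_singleton] at h1
        rw [Multiset.map_cons, Multiset.sum_cons]
        have h2 : ((n - v : ℕ) : ℤ) = (n : ℤ) - (v : ℤ) := by
          push_cast [Nat.cast_sub hvn]; ring
        rw [h2] at h1
        have h3 : ((Q.map nu).sum : ℤ) = (v : ℤ) := by exact_mod_cast hQ.2
        rw [Nat.cast_add]
        omega
      · rw [Multiset.card_cons, hQc]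
        rw [tauC0_pos _ (by omega)]
        omega
  · have hne : {k | ∃ P N, IsSABP n P N ∧ P.card + N.card = k}.Nonempty := by
      refine ⟨(Multiset.replicate n 1).card + (0 : Multiset ℕ).card,
        Multiset.replicate n 1, 0, ⟨?_, by simp, ?_⟩, rfl⟩
      · intro i hi; rw [Multiset.eq_of_mem_replicate hi]
      · have h := (abp_replicate n).2
        rw [h]
        simp
    obtain ⟨P, N, hPN, hcard⟩ : ∃ P N, IsSABP n P N ∧ P.card + N.card = tau n :=
      Nat.sInf_mem hne
    set B := (N.map nu).sum with hBdef
    have hPsum : (P.map nu).sum = n + B := by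
      have h1 := hPN.2.2
      have : ((P.map nu).sum : ℤ) = (n : ℤ) + (B : ℤ) := by omega
      exact_mod_cast this
    have h1 : tauP (n + B) ≤ P.card := abp_mem ⟨hPN.1, hPsum⟩
    have h2 : tauP B ≤ N.card := abp_mem ⟨hPN.2.1, rfl⟩
    calc (Finset.range (n + 1)).inf' (by simp) (fun v => tauP v + tauC0 (n - v))
        ≤ tauP (n + B) + tauP B := star B n hn
      _ ≤ tau n := by omega
end

section
/- Let S be a finite set of n vertices of 𝒯_∞ such that the complement is connected; equivalently, S is a disjoint union of c complete binary subtrees each with all leaves at the bottom level of 𝒯_∞. Then |(S, S̄)| = c and L(S) = (n + c)/2, where L(S) is the number of bottom-level leaves in S. -/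
lemma mem_cs {h j a i : ℕ} :
    (a, i) ∈ completeSubtree (h, j) ↔ a ≤ h ∧ j * 2 ^ (h - a) ≤ i ∧ i < (j + 1) * 2 ^ (h - a) := by
  simp only [completeSubtree, Finset.mem_biUnion, Finset.mem_range, Finset.mem_image,
    Finset.mem_Ico, Prod.mk.injEq]
  constructor
  · rintro ⟨b, hb, x, hx, rfl, rfl⟩
    exact ⟨by omega, hx.1, hx.2⟩
  · rintro ⟨h1, h2, h3⟩
    exact ⟨a, by omega, i, ⟨h2, h3⟩, rfl, rfl⟩

lemma self_mem_cs (v : ℕ × ℕ) : v ∈ completeSubtree v := by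
  obtain ⟨h, j⟩ := v
  rw [mem_cs]
  simp

lemma parent_mem_cs {v u : ℕ × ℕ} (hv : v ∈ completeSubtree u) (hne : v ≠ u) :
    parentT v ∈ completeSubtree u := by
  obtain ⟨a, i⟩ := v; obtain ⟨h, j⟩ := u
  rw [mem_cs] at hv
  obtain ⟨h1, h2, h3⟩ := hv
  have hah : a < h := by
    rcases Nat.lt_or_ge a h with h' | h'
    · exact h'
    · exfalso; apply hne
      have : a = h := le_antisymm h1 h'
      subst this
      simp at h2 h3
      exact Prod.ext rfl (by omega)
  show (a + 1, i / 2) ∈ _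
  rw [mem_cs]
  have he : h - a = (h - (a + 1)) + 1 := by omega
  rw [he, pow_succ] at h2 h3
  have e1 : j * (2 ^ (h - (a + 1)) * 2) = 2 * (j * 2 ^ (h - (a + 1))) := by ring
  have e2 : (j + 1) * (2 ^ (h - (a + 1)) * 2) = 2 * ((j + 1) * 2 ^ (h - (a + 1))) := by ring
  refine ⟨by omega, ?_, ?_⟩ <;> omega

lemma child_mem_cs {v u : ℕ × ℕ} (hv : parentT v ∈ completeSubtree u) :
    v ∈ completeSubtree u := by
  obtain ⟨a, i⟩ := v; obtain ⟨h, j⟩ := u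
  have hv' : (a + 1, i / 2) ∈ completeSubtree (h, j) := hv
  rw [mem_cs] at hv' ⊢
  obtain ⟨h1, h2, h3⟩ := hv'
  have he : h - a = (h - (a + 1)) + 1 := by omega
  rw [he, pow_succ]
  have e1 : j * (2 ^ (h - (a + 1)) * 2) = 2 * (j * 2 ^ (h - (a + 1))) := by ring
  have e2 : (j + 1) * (2 ^ (h - (a + 1)) * 2) = 2 * ((j + 1) * 2 ^ (h - (a + 1))) := by ring
  refine ⟨by omega, ?_, ?_⟩ <;> omega

lemma parent_self_not_mem_cs (v : ℕ × ℕ) : parentT v ∉ completeSubtree v := by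
  obtain ⟨h, j⟩ := v
  show (h + 1, j / 2) ∉ _
  rw [mem_cs]
  omega

lemma sum_two_pow (h : ℕ) : ∑ a ∈ Finset.range (h + 1), 2 ^ (h - a) = 2 ^ (h + 1) - 1 := by
  induction h with
  | zero => simp
  | succ m ih =>
    rw [Finset.sum_range_succ']
    simp only [Nat.succ_sub_succ]
    rw [ih, Nat.sub_zero]
    have : (1 : ℕ) ≤ 2 ^ (m + 1) := Nat.one_le_two_pow
    rw [pow_succ 2 (m + 1)]
    omega

lemma card_cs (v : ℕ × ℕ) : (completeSubtree v).card = 2 ^ (v.1 + 1) - 1 := by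
  obtain ⟨h, j⟩ := v
  rw [completeSubtree]
  rw [Finset.card_biUnion]
  · have : ∀ a ∈ Finset.range (h + 1),
        ((Finset.Ico (j * 2 ^ (h - a)) ((j + 1) * 2 ^ (h - a))).image
          (fun i => (a, i))).card = 2 ^ (h - a) := by
      intro a _
      rw [Finset.card_image_of_injective _ (fun x y hxy => by simpa using hxy),
        Nat.card_Ico, add_mul, one_mul, Nat.add_sub_cancel_left]
    rw [Finset.sum_congr rfl this]
    exact sum_two_pow h
  · intro x _ y _ hxy
    simp only [Finset.disjoint_left, Finset.mem_image]
    rintro ⟨p, q⟩ ⟨i, _, hi⟩ ⟨i', _, hi'⟩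
    apply hxy
    rw [Prod.mk.injEq] at hi hi'
    omega

lemma leaf_cs (v : ℕ × ℕ) :
    ((completeSubtree v).filter (fun w => w.1 = 0)).card = 2 ^ v.1 := by
  obtain ⟨h, j⟩ := v
  have he : (completeSubtree (h, j)).filter (fun w => w.1 = 0) =
      (Finset.Ico (j * 2 ^ h) ((j + 1) * 2 ^ h)).image (fun i => (0, i)) := by
    ext ⟨a, i⟩
    simp only [Finset.mem_filter, mem_cs, Finset.mem_image, Finset.mem_Ico, Prod.mk.injEq]
    constructor
    · rintro ⟨⟨h1, h2, h3⟩, rfl⟩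
      exact ⟨i, by simpa using ⟨h2, h3⟩, rfl, rfl⟩
    · rintro ⟨x, hx, rfl, rfl⟩
      exact ⟨⟨Nat.zero_le _, by simpa using hx⟩, rfl⟩
  rw [he, Finset.card_image_of_injective _ (fun x y hxy => by simpa using hxy), Nat.card_Ico, add_mul, one_mul, Nat.add_sub_cancel_left]

theorem stmt15 (S R : Finset (ℕ × ℕ)) (n c : ℕ)
    (hS : S = R.biUnion completeSubtree)
    (hdisj : ∀ u ∈ R, ∀ v ∈ R, u ≠ v → Disjoint (completeSubtree u) (completeSubtree v))
    (hn : S.card = n) (hc : R.card = c) :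
    cutCard S = c ∧ 2 * leafCount S = n + c := by
  -- parent of a root is not in S
  have hrootpar : ∀ u ∈ R, parentT u ∉ S := by
    intro u hu hmem
    rw [hS, Finset.mem_biUnion] at hmem
    obtain ⟨w, hw, hpw⟩ := hmem
    have hum : u ∈ completeSubtree w := child_mem_cs hpw
    by_cases hwu : w = u
    · subst hwu; exact parent_self_not_mem_cs w hpw
    · exact (Finset.disjoint_left.mp (hdisj u hu w hw (Ne.symm hwu))
        (self_mem_cs u)) hum
  -- cut set equals R
  have hcut : {v : ℕ × ℕ | ¬((v ∈ S) ↔ (parentT v ∈ S))} = (↑R : Set (ℕ × ℕ)) := by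
    ext v
    simp only [Set.mem_setOf_eq, Finset.coe_sort_coe, Set.mem_image, Finset.mem_coe]
    constructor
    · intro hv
      by_cases hvS : v ∈ S
      · have hpv : parentT v ∉ S := fun h => hv ⟨fun _ => h, fun _ => hvS⟩
        rw [hS, Finset.mem_biUnion] at hvS
        obtain ⟨u, hu, hvu⟩ := hvS
        by_cases hvu' : v = u
        · subst hvu'; exact hu
        · exact absurd (by rw [hS, Finset.mem_biUnion]; exact ⟨u, hu, parent_mem_cs hvu hvu'⟩) hpv
      · have hpv : parentT v ∈ S := by
          by_contra hpv
          exact hv ⟨fun h => absurd h hvS, fun h => absurd h hpv⟩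
        rw [hS, Finset.mem_biUnion] at hpv
        obtain ⟨u, hu, hpu⟩ := hpv
        exact absurd (by rw [hS, Finset.mem_biUnion]; exact ⟨u, hu, child_mem_cs hpu⟩) hvS
    · intro hv
      have h1 : v ∈ S := by rw [hS, Finset.mem_biUnion]; exact ⟨v, hv, self_mem_cs v⟩
      have h2 : parentT v ∉ S := hrootpar v hv
      exact fun h => h2 (h.mp h1)
  have hcutcard : cutCard S = c := by
    rw [cutCard, hcut, Set.ncard_coe_finset, hc]
  refine ⟨hcutcard, ?_⟩
  -- card computations
  have hncalc : n = ∑ u ∈ R, (2 ^ (u.1 + 1) - 1) := by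
    rw [← hn, hS, Finset.card_biUnion hdisj]
    exact Finset.sum_congr rfl fun u _ => card_cs u
  have hleaf : leafCount S = ∑ u ∈ R, 2 ^ u.1 := by
    rw [leafCount, hS, Finset.filter_biUnion, Finset.card_biUnion]
    · exact Finset.sum_congr rfl fun u _ => leaf_cs u
    · intro x hx y hy hxy
      exact Finset.disjoint_filter_filter (hdisj x hx y hy hxy)
  rw [hleaf, hncalc, ← hc, Finset.mul_sum, Finset.card_eq_sum_ones R,
    ← Finset.sum_add_distrib]
  refine Finset.sum_congr rfl fun u _ => ?_
  have : (1 : ℕ) ≤ 2 ^ (u.1 + 1) := Nat.one_le_two_pow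
  rw [pow_succ]
  omega
end

section
/- For any finite subset S of the vertices of 𝒯_∞ with |S| = n, define f_S(v) = 2^{ℓ(v)} − 1 if v ∈ S and parent(v) ∉ S; f_S(v) = −(2^{ℓ(v)} − 1) if v ∉ S and parent(v) ∈ S; and f_S(v) = 0 otherwise, where ℓ(v) is the level of v (leaves at level 1). Then n = Σ_v f_S(v), and the number of cut edges |(S, S̄)| equals the number of vertices v with f_S(v) ≠ 0. Moreover if S is connected then exactly one term f_S(v) is positive. -/
section Aux

lemma levelT_def (v : ℕ × ℕ) : levelT v = v.1 + 1 := rfl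

lemma parentT_fst (v : ℕ × ℕ) : (parentT v).1 = v.1 + 1 := rfl

lemma two_pow_pos (v : ℕ × ℕ) : (0:ℤ) < 2 ^ levelT v - 1 := by
  have h : (2:ℤ) ^ 1 ≤ 2 ^ levelT v := by
    apply pow_le_pow_right₀ (by norm_num)
    simp [levelT]
  norm_num at h
  linarith

lemma fS_pos_iff (S : Finset (ℕ × ℕ)) (v : ℕ × ℕ) :
    0 < fS S v ↔ (v ∈ S ∧ parentT v ∉ S) := by
  have hp := two_pow_pos v
  by_cases h1 : v ∈ S <;> by_cases h2 : parentT v ∈ S <;>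
    simp [fS, h1, h2] <;> linarith

lemma fS_ne_zero_iff (S : Finset (ℕ × ℕ)) (v : ℕ × ℕ) :
    fS S v ≠ 0 ↔ ¬ ((v ∈ S) ↔ (parentT v ∈ S)) := by
  have hp := two_pow_pos v
  by_cases h1 : v ∈ S <;> by_cases h2 : parentT v ∈ S <;>
    simp [fS, h1, h2] <;> linarith

/-- the (potential) children of a vertex -/
def chF (v : ℕ × ℕ) : Finset (ℕ × ℕ) :=
  if v.1 = 0 then ∅ else {(v.1 - 1, 2 * v.2), (v.1 - 1, 2 * v.2 + 1)}

lemma mem_chF_of_parent {w v : ℕ × ℕ} (h : parentT w = v) : w ∈ chF v := by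
  have h1 : w.1 + 1 = v.1 := by rw [← h]; rfl
  have h2 : w.2 / 2 = v.2 := by rw [← h]; rfl
  have hv1 : v.1 ≠ 0 := by omega
  simp only [chF, if_neg hv1, Finset.mem_insert, Finset.mem_singleton]
  have hw1 : w.1 = v.1 - 1 := by omega
  have : w.2 = 2 * v.2 ∨ w.2 = 2 * v.2 + 1 := by omega
  rcases this with h' | h'
  · left; exact Prod.ext hw1 h'
  · right; exact Prod.ext hw1 h'

lemma parent_of_mem_chF {w v : ℕ × ℕ} (h : w ∈ chF v) : parentT w = v := by
  by_cases hv1 : v.1 = 0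
  · simp [chF, hv1] at h
  · simp only [chF, if_neg hv1, Finset.mem_insert, Finset.mem_singleton] at h
    rcases h with h | h <;> subst h <;>
      exact Prod.ext (by show v.1 - 1 + 1 = v.1; omega) (by show _ / 2 = v.2; omega)

lemma fst_lt_of_mem_chF {w v : ℕ × ℕ} (h : w ∈ chF v) : w.1 < v.1 := by
  have := parent_of_mem_chF h
  have h1 : w.1 + 1 = v.1 := by rw [← this]; rfl
  omega

lemma fS_support_subset (S : Finset (ℕ × ℕ)) :
    Function.support (fS S) ⊆ ↑(S ∪ S.biUnion chF) := by
  intro v hv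
  simp only [Function.mem_support] at hv
  have : v ∈ S ∨ parentT v ∈ S := by
    by_contra h
    push_neg at h
    simp [fS, h.1, h.2] at hv
  simp only [Finset.coe_union, Set.mem_union, Finset.coe_biUnion, Set.mem_iUnion]
  rcases this with h | h
  · exact Or.inl h
  · exact Or.inr ⟨parentT v, h, mem_chF_of_parent rfl⟩

lemma sum_fS_aux : ∀ n : ℕ, ∀ S : Finset (ℕ × ℕ), S.card = n →
    (∑ᶠ v : ℕ × ℕ, fS S v) = (n : ℤ) := by
  intro n
  induction n with
  | zero =>
    intro S h
    rw [Finset.card_eq_zero] at h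
    subst h
    have : fS (∅ : Finset (ℕ × ℕ)) = fun _ => 0 := by
      funext v; simp [fS]
    rw [this]
    simp
  | succ n ih =>
    intro S hcard
    have hne : S.Nonempty := by
      rw [← Finset.card_pos, hcard]; omega
    obtain ⟨vmax, hvS, hmax⟩ := S.exists_max_image (fun v => v.1) hne
    have hpar : parentT vmax ∉ S := by
      intro hc
      have := hmax _ hc
      rw [parentT_fst] at this
      omega
    set S' := S.erase vmax with hS'
    have hS'sub : S' ⊆ S := Finset.erase_subset _ _
    have hS'card : S'.card = n := by
      rw [hS', Finset.card_erase_of_mem hvS, hcard]; omega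
    have hvS' : vmax ∉ S' := Finset.notMem_erase _ _
    have hparS' : parentT vmax ∉ S' := fun hc => hpar (hS'sub hc)
    set T := S ∪ S.biUnion chF with hT
    have hsubS : Function.support (fS S) ⊆ ↑T := fS_support_subset S
    have hsubS' : Function.support (fS S') ⊆ ↑T := by
      refine (fS_support_subset S').trans ?_
      apply Finset.coe_subset.mpr
      exact Finset.union_subset_union hS'sub
        (Finset.biUnion_subset_biUnion_of_subset_left _ hS'sub)
    have hfin1 : (∑ᶠ v : ℕ × ℕ, fS S v) = ∑ v ∈ T, fS S v :=
      finsum_eq_finset_sum_of_support_subset _ hsubS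
    have hfin2 : (∑ᶠ v : ℕ × ℕ, fS S' v) = ∑ v ∈ T, fS S' v :=
      finsum_eq_finset_sum_of_support_subset _ hsubS'
    have ihS' : (∑ v ∈ T, fS S' v) = (n : ℤ) := by
      rw [← hfin2]; exact ih S' hS'card
    have hmem : ∀ v : ℕ × ℕ, v ≠ vmax → ((v ∈ S') ↔ (v ∈ S)) := by
      intro v hv; simp [hS', Finset.mem_erase, hv]
    have hDzero : ∀ v : ℕ × ℕ, v ∉ insert vmax (chF vmax) → fS S v - fS S' v = 0 := by
      intro v hv
      simp only [Finset.mem_insert, not_or] at hv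
      have hpne : parentT v ≠ vmax := fun hc => hv.2 (mem_chF_of_parent hc)
      have h1 : (v ∈ S') ↔ (v ∈ S) := hmem v hv.1
      have h2 : (parentT v ∈ S') ↔ (parentT v ∈ S) := hmem _ hpne
      simp only [fS, h1, h2, sub_self]
    have hD_vmax : fS S vmax - fS S' vmax = 2 ^ (vmax.1 + 1) - 1 := by
      simp [fS, hvS, hpar, hvS', hparS', levelT]
    have hD_child : ∀ c ∈ chF vmax, fS S c - fS S' c = -(2 ^ vmax.1 - 1) := by
      intro c hc
      have hpc : parentT c = vmax := parent_of_mem_chF hc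
      have hlt : c.1 < vmax.1 := fst_lt_of_mem_chF hc
      have hcne : c ≠ vmax := fun h => by rw [h] at hlt; omega
      have hl : levelT c = vmax.1 := by
        have h1 : c.1 + 1 = vmax.1 := by
          have := congrArg Prod.fst hpc; rw [parentT_fst] at this; exact this
        simp [levelT, h1]
      have hmc : (c ∈ S') ↔ (c ∈ S) := hmem c hcne
      by_cases hcS : c ∈ S
      · have hcS' : c ∈ S' := hmc.mpr hcS
        simp [fS, hpc, hcS, hcS', hvS, hvS', hparS', hl]
      · have hcS' : c ∉ S' := fun hc2 => hcS (hmc.mp hc2)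
        simp [fS, hpc, hcS, hcS', hvS, hvS', hparS', hl]
    have hUsubT : insert vmax (chF vmax) ⊆ T := by
      intro x hx
      rcases Finset.mem_insert.mp hx with h | h
      · exact Finset.mem_union_left _ (h ▸ hvS)
      · exact Finset.mem_union_right _ (Finset.mem_biUnion.mpr ⟨vmax, hvS, h⟩)
    have hvnotin : vmax ∉ chF vmax := fun h => by
      have := fst_lt_of_mem_chF h; omega
    have hsumD : (∑ v ∈ T, (fS S v - fS S' v)) = 1 := by
      rw [← Finset.sum_subset hUsubT (fun x _ hx => hDzero x hx)]
      by_cases h0 : vmax.1 = 0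
      · rw [Finset.sum_insert hvnotin, hD_vmax]
        simp [chF, h0]
      · have hcard2 : (chF vmax).card = 2 := by
          rw [chF, if_neg h0]
          rw [Finset.card_insert_of_notMem (by simp), Finset.card_singleton]
        rw [Finset.sum_insert hvnotin, Finset.sum_congr rfl hD_child,
          Finset.sum_const, hcard2, hD_vmax]
        have h2 : (2:ℤ) ^ (vmax.1 + 1) = 2 * 2 ^ vmax.1 := by
          rw [pow_succ]; ring
        simp only [nsmul_eq_mul]
        push_cast
        linarith
    rw [hfin1]
    have hsplit : (∑ v ∈ T, fS S v) = (∑ v ∈ T, fS S' v) + (∑ v ∈ T, (fS S v - fS S' v)) := by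
      rw [← Finset.sum_add_distrib]
      apply Finset.sum_congr rfl
      intro x _; ring
    rw [hsplit, ihS', hsumD]
    push_cast
    ring

/-- ancestry relation: `v` is an ancestor of `u` (weakly) -/
def Desc (v u : ℕ × ℕ) : Prop := ∃ k : ℕ, parentT^[k] u = v

lemma iterate_parentT_fst : ∀ (k : ℕ) (u : ℕ × ℕ), (parentT^[k] u).1 = u.1 + k := by
  intro k
  induction k with
  | zero => intro u; simp
  | succ k ih =>
    intro u
    rw [Function.iterate_succ_apply, ih, parentT_fst]
    omega

lemma desc_antisymm {v u : ℕ × ℕ} (h1 : Desc v u) (h2 : Desc u v) : u = v := by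
  obtain ⟨k, hk⟩ := h1
  obtain ⟨m, hm⟩ := h2
  have h3 : parentT^[k + m] v = v := by
    rw [Function.iterate_add_apply, hm, hk]
  have h4 := congrArg Prod.fst h3
  rw [iterate_parentT_fst] at h4
  have hm0 : m = 0 := by omega
  rw [hm0] at hm
  exact hm.symm

lemma root_walk {S : Finset (ℕ × ℕ)} {v : ℕ × ℕ} (hv : parentT v ∉ S) :
    ∀ {a b : ↑(↑S : Set (ℕ × ℕ))} (_ : (treeGraph.induce (↑S : Set (ℕ × ℕ))).Walk a b),
      Desc v a.1 → Desc v b.1 := by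
  intro a b p
  induction p with
  | nil => exact id
  | @cons a x b h p ih =>
    intro hd
    apply ih
    obtain ⟨k, hk⟩ := hd
    have hadj : parentT a.1 = x.1 ∨ parentT x.1 = a.1 := h
    rcases hadj with hax | hxa
    · -- x is the parent of a
      rcases Nat.eq_zero_or_pos k with hk0 | hkpos
      · exfalso
        rw [hk0] at hk
        simp at hk
        rw [hk] at hax
        rw [hax] at hv
        exact hv x.2
      · obtain ⟨k', rfl⟩ : ∃ k', k = k' + 1 := ⟨k - 1, by omega⟩
        refine ⟨k', ?_⟩
        rw [Function.iterate_succ_apply, hax] at hk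
        exact hk
    · -- a is the parent of x
      exact ⟨k + 1, by rw [Function.iterate_succ_apply, hxa]; exact hk⟩

end Aux

theorem stmt16 (S : Finset (ℕ × ℕ)) :
    (∑ᶠ v : ℕ × ℕ, fS S v) = (S.card : ℤ) ∧
    cutCard S = Set.ncard {v : ℕ × ℕ | fS S v ≠ 0} ∧
    ((treeGraph.induce (↑S : Set (ℕ × ℕ))).Connected → ∃! v : ℕ × ℕ, 0 < fS S v) := by
  refine ⟨sum_fS_aux S.card S rfl, ?_, ?_⟩
  · unfold cutCard
    congr 1
    ext v
    simp only [Set.mem_setOf_eq]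
    exact (fS_ne_zero_iff S v).symm
  · intro hconn
    have hne : S.Nonempty := by
      obtain ⟨⟨w, hw⟩⟩ := hconn.nonempty
      exact ⟨w, by simpa using hw⟩
    obtain ⟨vmax, hvS, hmax⟩ := S.exists_max_image (fun v => v.1) hne
    have hpar : parentT vmax ∉ S := by
      intro hc; have := hmax _ hc; rw [parentT_fst] at this; omega
    refine ⟨vmax, (fS_pos_iff S vmax).mpr ⟨hvS, hpar⟩, ?_⟩
    intro u hu
    obtain ⟨huS, hupar⟩ := (fS_pos_iff S u).mp hu
    obtain ⟨p⟩ := hconn ⟨u, by simpa using huS⟩ ⟨vmax, by simpa using hvS⟩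
    have h1 : Desc u vmax := root_walk hupar p ⟨0, rfl⟩
    obtain ⟨q⟩ := hconn ⟨vmax, by simpa using hvS⟩ ⟨u, by simpa using huS⟩
    have h2 : Desc vmax u := root_walk hpar q ⟨0, rfl⟩
    exact desc_antisymm h2 h1
end
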